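/- Let A be a left Noetherian ring and I a two-sided idempotent ideal of A such that ann_M(I) is a direct summand of M for every right A-module M. Then I = Ae for some idempotent e ∈ A. -/

import Mathlib

open MulOpposite

variable (A : Type) [Ring A]

/-- `ann_M(I) = {m ∈ M | m·a = 0 for all a ∈ I}` as a submodule of the right `A`-module `M`. -/
def rAnn (I : Ideal A) (M : Type) [AddCommGroup M] [Module Aᵐᵒᵖ M] :
    Submodule Aᵐᵒᵖ M where
  carrier := {m : M | ∀ a ∈ I, op a • m = 0}
  add_mem' := by
    intro x y hx hy a ha
    rw [smul_add, hx a ha, hy a ha, add_zero]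
  zero_mem' := by
    intro a _
    rw [smul_zero]
  smul_mem' := by
    intro c m hm a ha
    rw [smul_smul]
    have h1 : op a * c = op (c.unop * a) := by
      rw [op_mul, op_unop]
    rw [h1]
    exact hm (c.unop * a) (I.mul_mem_left c.unop ha)

lemma mem_rAnn {I : Ideal A} {M : Type} [AddCommGroup M] [Module Aᵐᵒᵖ M] {m : M} :
    m ∈ rAnn A I M ↔ ∀ a ∈ I, op a • m = 0 := Iff.rfl

/-- The submodule `M·I` of a right `A`-module `M`. -/
def prodSpan (I : Ideal A) (M : Type) [AddCommGroup M] [Module Aᵐᵒᵖ M] :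
    Submodule Aᵐᵒᵖ M :=
  Submodule.span Aᵐᵒᵖ {x : M | ∃ a ∈ I, ∃ m : M, x = op a • m}

/-- If `M = M·I` and `ann_M(I)` is a direct summand of `M`, then `ann_M(I) = 0`. -/
lemma lemA (I : Ideal A) (M : Type) [AddCommGroup M] [Module Aᵐᵒᵖ M]
    (hM : prodSpan A I M = ⊤)
    (hs : ∃ N' : Submodule Aᵐᵒᵖ M, rAnn A I M ⊓ N' = ⊥ ∧ rAnn A I M ⊔ N' = ⊤) :
    rAnn A I M = ⊥ := by
  obtain ⟨N', h1, h2⟩ := hs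
  have hN : N' = ⊤ := by
    rw [← top_le_iff, ← hM, prodSpan]
    refine Submodule.span_le.mpr ?_
    rintro x ⟨a, ha, m, rfl⟩
    have hm : m ∈ rAnn A I M ⊔ N' := h2 ▸ Submodule.mem_top
    obtain ⟨p, hp, q, hq, rfl⟩ := Submodule.mem_sup.mp hm
    rw [smul_add, (mem_rAnn A).mp hp a ha, zero_add]
    exact N'.smul_mem _ hq
  rw [← h1, hN, inf_top_eq]

/-- For an idempotent ideal `I`, the module `M·I` satisfies `(M·I)·I = M·I`. -/
lemma lemC (I : Ideal A)
    (hright : ∀ a ∈ I, ∀ b : A, a * b ∈ I)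
    (hidem : ∀ a ∈ I, a ∈ AddSubgroup.closure {x : A | ∃ b ∈ I, ∃ c ∈ I, x = b * c})
    (M : Type) [AddCommGroup M] [Module Aᵐᵒᵖ M] :
    prodSpan A I (↥(prodSpan A I M)) = ⊤ := by
  set K := prodSpan A I M with hK
  rw [← top_le_iff]
  rintro ⟨k, hk⟩ -
  have hQ : k ∈ (prodSpan A I (↥K)).map K.subtype := by
    revert hk
    show k ∈ K → _
    rw [hK, prodSpan]
    intro hk
    refine Submodule.span_le.mpr ?_ hk
    rintro x ⟨a, ha, m, rfl⟩
    -- use idempotency of `I` on `a`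
    have key : ∀ z, z ∈ AddSubgroup.closure {x : A | ∃ b ∈ I, ∃ c ∈ I, x = b * c} →
        op z • m ∈ (prodSpan A I (↥K)).map K.subtype := by
      intro z hz
      induction hz using AddSubgroup.closure_induction with
      | mem w hw =>
        obtain ⟨b, hb, c, hc, rfl⟩ := hw
        have hbK : op b • m ∈ K := by
          rw [hK, prodSpan]
          exact Submodule.subset_span ⟨b, hb, m, rfl⟩
        have h1 : op (b * c) • m = op c • (op b • m) := by
          rw [op_mul, mul_smul]
        rw [h1]
        refine ⟨op c • (⟨op b • m, hbK⟩ : ↥K), ?_, rfl⟩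
        exact Submodule.subset_span ⟨c, hc, ⟨op b • m, hbK⟩, rfl⟩
      | zero => rw [op_zero, zero_smul]; exact Submodule.zero_mem _
      | add u v hu hv hpu hpv =>
        rw [op_add, add_smul]
        exact Submodule.add_mem _ hpu hpv
      | neg u hu hpu =>
        rw [op_neg, neg_smul]
        exact Submodule.neg_mem _ hpu
    exact key a (hidem a ha)
  obtain ⟨⟨k', hk'⟩, hmem, hval⟩ := hQ
  have : (⟨k, hk⟩ : ↥K) = ⟨k', hk'⟩ := Subtype.ext hval.symm
  rw [this]
  exact hmem

/-- Key lemma: an element of `M·I` annihilated by `I` is zero. -/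
lemma lemB (I : Ideal A)
    (hright : ∀ a ∈ I, ∀ b : A, a * b ∈ I)
    (hidem : ∀ a ∈ I, a ∈ AddSubgroup.closure {x : A | ∃ b ∈ I, ∃ c ∈ I, x = b * c})
    (hsplit : ∀ (M : Type) [AddCommGroup M] [Module Aᵐᵒᵖ M],
      ∃ N' : Submodule Aᵐᵒᵖ M, rAnn A I M ⊓ N' = ⊥ ∧ rAnn A I M ⊔ N' = ⊤)
    (M : Type) [AddCommGroup M] [Module Aᵐᵒᵖ M]
    (m : M) (hm : m ∈ prodSpan A I M) (hann : ∀ a ∈ I, op a • m = 0) : m = 0 := by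
  have h0 := lemA A I (↥(prodSpan A I M)) (lemC A I hright hidem M) (hsplit _)
  have hmem : (⟨m, hm⟩ : ↥(prodSpan A I M)) ∈ rAnn A I ↥(prodSpan A I M) := by
    rw [mem_rAnn]
    intro a ha
    apply Subtype.ext
    show op a • m = 0
    exact hann a ha
  rw [h0, Submodule.mem_bot] at hmem
  simpa using congrArg Subtype.val hmem

/-- if `A` is left Noetherian and `I` is a two-sided idempotent ideal of `A`
such that `ann_M(I)` is a direct summand of every right `A`-module `M`, then `I = Ae` for
some idempotent `e ∈ A`. -/
theorem stmt_11 [IsNoetherianRing A] (I : Ideal A)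
    (hright : ∀ a ∈ I, ∀ b : A, a * b ∈ I)
    (hidem : ∀ a ∈ I, a ∈ AddSubgroup.closure {x : A | ∃ b ∈ I, ∃ c ∈ I, x = b * c})
    (hsplit : ∀ (M : Type) [AddCommGroup M] [Module Aᵐᵒᵖ M],
      ∃ N' : Submodule Aᵐᵒᵖ M, rAnn A I M ⊓ N' = ⊥ ∧ rAnn A I M ⊔ N' = ⊤) :
    ∃ e : A, IsIdempotentElem e ∧ (I : Set A) = {x : A | ∃ a : A, x = a * e} := by
  classical
  obtain ⟨s, hs⟩ : I.FG := IsNoetherian.noetherian I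
  have hxI : ∀ i : ↥s, (i : A) ∈ I := fun i => hs ▸ Submodule.subset_span i.2
  -- the right module `(s → A) / xI` where `x = (a₁, …, aₙ)` lists the generators
  let S : Submodule Aᵐᵒᵖ (↥s → A) :=
    { carrier := {y | ∃ c ∈ I, y = fun i : ↥s => (i : A) * c}
      add_mem' := by
        rintro y z ⟨c, hc, rfl⟩ ⟨d, hd, rfl⟩
        exact ⟨c + d, I.add_mem hc hd, by funext i; simp [mul_add]⟩
      zero_mem' := ⟨0, I.zero_mem, by funext i; simp⟩
      smul_mem' := by
        rintro b y ⟨c, hc, rfl⟩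
        refine ⟨c * b.unop, hright c hc b.unop, ?_⟩
        funext i
        show ((fun i : ↥s => (i : A) * c) i) * b.unop = (i : A) * (c * b.unop)
        rw [mul_assoc] }
  let M := (↥s → A) ⧸ S
  let x : ↥s → A := fun i => (i : A)
  let m : M := Submodule.Quotient.mk x
  have hmK : m ∈ prodSpan A I M := by
    have hx : x = ∑ i, Pi.single i (x i) := (Finset.univ_sum_single x).symm
    have hm : m = ∑ i, (Submodule.Quotient.mk (Pi.single i (x i)) : M) := by
      have h := map_sum S.mkQ (fun i => Pi.single i (x i)) Finset.univ
      simp only [Submodule.mkQ_apply] at h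
      rw [show m = (Submodule.Quotient.mk x : M) from rfl,
        congrArg (fun y => (Submodule.Quotient.mk y : M)) hx]
      exact h
    rw [hm]
    refine Submodule.sum_mem _ fun i _ => ?_
    have h1 : (Pi.single i (x i) : ↥s → A) = op (x i) • Pi.single i (1 : A) := by
      funext j
      rw [Pi.smul_apply, op_smul_eq_mul]
      by_cases h : j = i
      · subst h; rw [Pi.single_eq_same, Pi.single_eq_same, one_mul]
      · rw [Pi.single_eq_of_ne h, Pi.single_eq_of_ne h, zero_mul]
    have h2 : (Submodule.Quotient.mk (Pi.single i (x i)) : M)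
        = op (x i) • (Submodule.Quotient.mk (Pi.single i (1 : A)) : M) := by
      rw [h1, ← Submodule.Quotient.mk_smul]
    rw [h2]
    exact Submodule.subset_span ⟨x i, hxI i, _, rfl⟩
  have hann : ∀ a ∈ I, op a • m = 0 := by
    intro a ha
    show op a • (Submodule.Quotient.mk x : M) = 0
    rw [← Submodule.Quotient.mk_smul, Submodule.Quotient.mk_eq_zero]
    exact ⟨a, ha, rfl⟩
  have hm0 : m = 0 := lemB A I hright hidem hsplit M m hmK hann
  rw [show m = (Submodule.Quotient.mk x : M) from rfl,
    Submodule.Quotient.mk_eq_zero] at hm0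
  obtain ⟨c, hc, hxc⟩ := hm0
  have hgen : ∀ a ∈ I, a * c = a := by
    intro a ha
    rw [← hs] at ha
    induction ha using Submodule.span_induction with
    | mem w hw =>
      have := congrFun hxc ⟨w, hw⟩
      exact this.symm
    | zero => rw [zero_mul]
    | add u v hu hv hpu hpv => rw [add_mul, hpu, hpv]
    | smul r u hu hpu =>
      rw [smul_eq_mul, mul_assoc, hpu]
  refine ⟨c, hgen c hc, ?_⟩
  ext a
  constructor
  · intro ha
    exact ⟨a, (hgen a ha).symm⟩
  · rintro ⟨b, rfl⟩
    exact I.mul_mem_left b hc
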